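/- arXiv:1605.08973 — 8 statements merged into one kernel-verified Lean document; each statement's English description precedes it below -/
import Mathlib

section
/- Let 3 < α ≤ 4 and define G(t,s) = [(t−s)^(α−1) + (1−s)^(α−2) t^(α−2)((s−t)+(α−2)(1−t)s)]/Γ(α) for 0 ≤ s ≤ t ≤ 1, and G(t,s) = (1−s)^(α−2) t^(α−2)((s−t)+(α−2)(1−t)s)/Γ(α) for 0 ≤ t ≤ s ≤ 1. Then G(t,s) ≥ 0 for all t, s ∈ [0,1]. -/
open Real

noncomputable def greenG (α t s : ℝ) : ℝ :=
  if s ≤ t then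
    ((t - s) ^ (α - 1) + (1 - s) ^ (α - 2) * t ^ (α - 2) * ((s - t) + (α - 2) * (1 - t) * s)) / Real.Gamma α
  else
    (1 - s) ^ (α - 2) * t ^ (α - 2) * ((s - t) + (α - 2) * (1 - t) * s) / Real.Gamma α

/-- Convexity-type inequality `a^p - d^p ≤ p * a^(p-1) * (a - d)` for `0 ≤ d ≤ a`, `1 ≤ p`. -/
lemma bern_aux {a d p : ℝ} (ha : 0 < a) (hd : 0 ≤ d) (hda : d ≤ a) (hp : 1 ≤ p) :
    a ^ p - d ^ p ≤ p * a ^ (p - 1) * (a - d) := by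
  have hs : (-1 : ℝ) ≤ d / a - 1 := by
    have : 0 ≤ d / a := div_nonneg hd ha.le
    linarith
  have key := one_add_mul_self_le_rpow_one_add hs hp
  rw [add_sub_cancel] at key
  have hdiv : (d / a) ^ p = d ^ p / a ^ p := Real.div_rpow hd ha.le p
  rw [hdiv] at key
  have hap : (0:ℝ) < a ^ p := Real.rpow_pos_of_pos ha p
  have hmul := mul_le_mul_of_nonneg_right key hap.le
  have h1 : (1 + p * (d / a - 1)) * a ^ p = a ^ p + p * (a ^ p / a) * (d - a) := by
    field_simp
  have h2 : d ^ p / a ^ p * a ^ p = d ^ p := by field_simp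
  rw [h1, h2] at hmul
  have h3 : a ^ p / a = a ^ (p - 1) := by
    rw [Real.rpow_sub ha, Real.rpow_one]
  rw [h3] at hmul
  nlinarith [hmul]

theorem stmt4 (α : ℝ) (hα : 3 < α) (hα4 : α ≤ 4)
    (t s : ℝ) (ht : t ∈ Set.Icc (0:ℝ) 1) (hs : s ∈ Set.Icc (0:ℝ) 1) :
    0 ≤ greenG α t s := by
  obtain ⟨ht0, ht1⟩ := ht
  obtain ⟨hs0, hs1⟩ := hs
  have hΓ : 0 < Real.Gamma α := Real.Gamma_pos_of_pos (by linarith)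
  have hp1 : (1:ℝ) ≤ α - 2 := by linarith
  have hp0 : (0:ℝ) < α - 2 := by linarith
  have h1s : 0 ≤ 1 - s := by linarith
  have h1t : 0 ≤ 1 - t := by linarith
  unfold greenG
  split_ifs with hst
  · -- s ≤ t
    apply div_nonneg _ hΓ.le
    rcases eq_or_lt_of_le hst with heq | hlt
    · subst heq
      simp only [sub_self, Real.zero_rpow (by linarith : α - 1 ≠ 0), zero_add]
      positivity
    · -- t - s > 0
      set d := t - s with hdef
      have hd : 0 < d := by simp [hdef]; linarith
      set a := t * (1 - s) with hadef
      have hda : d ≤ a := by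
        have : a - d = s * (1 - t) := by ring
        nlinarith
      have ha : 0 < a := lt_of_lt_of_le hd hda
      have hta : (1 - s) ^ (α - 2) * t ^ (α - 2) = a ^ (α - 2) := by
        rw [hadef, Real.mul_rpow ht0 h1s, mul_comm]
      rw [hta]
      have hd1 : d ^ (α - 1) = d ^ (α - 2) * d := by
        rw [show α - 1 = (α - 2) + 1 by ring, Real.rpow_add_one (ne_of_gt hd)]
      have key := bern_aux ha hd.le hda hp1
      -- a^p - d^p ≤ p * a^(p-1) * (a - d)
      have hap1 : a ^ (α - 2 - 1) * a = a ^ (α - 2) := by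
        rw [← Real.rpow_add_one (ne_of_gt ha), sub_add_cancel]
      have hApos : 0 ≤ a ^ (α - 2 - 1) := (Real.rpow_pos_of_pos ha _).le
      have had : a ^ (α - 2 - 1) * d ≤ a ^ (α - 2 - 1) * a :=
        mul_le_mul_of_nonneg_left hda hApos
      -- multiply key by d ≥ 0:
      have key2 : (a ^ (α - 2) - d ^ (α - 2)) * d ≤ (α - 2) * a ^ (α - 2 - 1) * (a - d) * d :=
        mul_le_mul_of_nonneg_right key hd.le
      have hadnn : 0 ≤ a - d := by linarith
      have step : (α - 2) * a ^ (α - 2 - 1) * (a - d) * d ≤ (α - 2) * a ^ (α - 2) * (a - d) := by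
        calc (α - 2) * a ^ (α - 2 - 1) * (a - d) * d
            = (α - 2) * (a ^ (α - 2 - 1) * d) * (a - d) := by ring
          _ ≤ (α - 2) * (a ^ (α - 2 - 1) * a) * (a - d) := by
              apply mul_le_mul_of_nonneg_right _ hadnn
              exact mul_le_mul_of_nonneg_left had (by linarith)
          _ = (α - 2) * a ^ (α - 2) * (a - d) := by rw [hap1]
      have final : a ^ (α - 2) * d - d ^ (α - 2) * d ≤ (α - 2) * a ^ (α - 2) * (a - d) := by
        nlinarith [key2, step]
      have hsd : s - t = -d := by rw [hdef]; ring
      have hadsub : a - d = (1 - t) * s := by rw [hadef, hdef]; ring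
      rw [hd1, hsd]
      have expand : d ^ (α - 2) * d + a ^ (α - 2) * (-d + (α - 2) * (1 - t) * s)
          = d ^ (α - 2) * d - a ^ (α - 2) * d + (α - 2) * a ^ (α - 2) * ((1 - t) * s) := by ring
      rw [expand, ← hadsub]
      linarith [final]
  · -- t < s
    push_neg at hst
    apply div_nonneg _ hΓ.le
    have : 0 ≤ s - t + (α - 2) * (1 - t) * s := by
      nlinarith [mul_nonneg (mul_nonneg hp0.le h1t) hs0]
    positivity
end

section
/- Let 3 < α ≤ 4, t ∈ [0,1], s ∈ (0,1). Then for the Green's function G defined as above, one has the bound G(t,s) ≤ [(t−s)₊^(α−1) + (α−1)(1−s)^(α−2) t^(α−2) s]/Γ(α), where (t−s)₊ = max(t−s, 0). In particular G(t,s) ≤ α/Γ(α) for all t, s ∈ [0,1]. -/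
open Real

theorem stmt6 (α : ℝ) (hα : 3 < α) (hα4 : α ≤ 4) :
    (∀ t ∈ Set.Icc (0:ℝ) 1, ∀ s ∈ Set.Ioo (0:ℝ) 1,
      greenG α t s ≤
        ((max (t - s) 0) ^ (α - 1) + (α - 1) * (1 - s) ^ (α - 2) * t ^ (α - 2) * s) / Real.Gamma α) ∧
    (∀ t ∈ Set.Icc (0:ℝ) 1, ∀ s ∈ Set.Icc (0:ℝ) 1, greenG α t s ≤ α / Real.Gamma α) := by
  have hΓ : 0 < Real.Gamma α := Real.Gamma_pos_of_pos (by linarith)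
  constructor
  · rintro t ⟨ht0, ht1⟩ s ⟨hs0, hs1⟩
    have hA : 0 ≤ (1 - s) ^ (α - 2) := Real.rpow_nonneg (by linarith) _
    have hB : 0 ≤ t ^ (α - 2) := Real.rpow_nonneg ht0 _
    have hC : (s - t) + (α - 2) * (1 - t) * s ≤ (α - 1) * s := by nlinarith [mul_nonneg (mul_nonneg ht0 hs0.le) (by linarith : (0:ℝ) ≤ α - 2)]
    have key : (1 - s) ^ (α - 2) * t ^ (α - 2) * ((s - t) + (α - 2) * (1 - t) * s) ≤
        (α - 1) * (1 - s) ^ (α - 2) * t ^ (α - 2) * s := by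
      nlinarith [mul_le_mul_of_nonneg_left hC (mul_nonneg hA hB)]
    unfold greenG
    split_ifs with h
    · rw [max_eq_left (by linarith)]
      rw [div_le_div_iff_of_pos_right hΓ]
      linarith
    · rw [max_eq_right (by linarith), Real.zero_rpow (by linarith), zero_add]
      rw [div_le_div_iff_of_pos_right hΓ]
      linarith
  · rintro t ⟨ht0, ht1⟩ s ⟨hs0, hs1⟩
    have hA : 0 ≤ (1 - s) ^ (α - 2) := Real.rpow_nonneg (by linarith) _
    have hB : 0 ≤ t ^ (α - 2) := Real.rpow_nonneg ht0 _
    have hA1 : (1 - s) ^ (α - 2) ≤ 1 := Real.rpow_le_one (by linarith) (by linarith) (by linarith)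
    have hB1 : t ^ (α - 2) ≤ 1 := Real.rpow_le_one ht0 ht1 (by linarith)
    have hC : (s - t) + (α - 2) * (1 - t) * s ≤ α - 1 := by nlinarith [mul_nonneg (mul_nonneg ht0 hs0) (by linarith : (0:ℝ) ≤ α - 2), mul_nonneg (by linarith : (0:ℝ) ≤ α - 1) (by linarith : (0:ℝ) ≤ 1 - s)]
    have hAB : (1 - s) ^ (α - 2) * t ^ (α - 2) ≤ 1 := mul_le_one₀ hA1 hB hB1
    have key : (1 - s) ^ (α - 2) * t ^ (α - 2) * ((s - t) + (α - 2) * (1 - t) * s) ≤ α - 1 :=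
      calc (1 - s) ^ (α - 2) * t ^ (α - 2) * ((s - t) + (α - 2) * (1 - t) * s)
          ≤ (1 - s) ^ (α - 2) * t ^ (α - 2) * (α - 1) :=
            mul_le_mul_of_nonneg_left hC (mul_nonneg hA hB)
        _ ≤ 1 * (α - 1) := mul_le_mul_of_nonneg_right hAB (by linarith)
        _ = α - 1 := by ring
    unfold greenG
    split_ifs with h
    · have h1 : (t - s) ^ (α - 1) ≤ 1 :=
        Real.rpow_le_one (by linarith) (by linarith) (by linarith)
      rw [div_le_div_iff_of_pos_right hΓ]
      linarith
    · rw [div_le_div_iff_of_pos_right hΓ]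
      linarith
end

section
/- Let 0 < σ < 1 and 3 < α ≤ 4. Define H(t) = ∫₀¹ G(t,s) F(s) ds where F : (0,1] → ℝ is continuous, and s ↦ s^σ F(s) extends to a continuous function on [0,1] bounded by M. Then |H(t) − H(0)| = |H(t)| ≤ (M(α−1) t^(α−2)/Γ(α)) B(1−σ, α−1) + (M t^(α−σ)/Γ(α)) B(1−σ, α) for all t ∈ [0,1]. In particular H is continuous at 0 with H(0) = 0. -/
open Real

noncomputable def eulerBeta (x y : ℝ) : ℝ := ∫ u in (0:ℝ)..1, u ^ (x - 1) * (1 - u) ^ (y - 1)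

lemma eulerBeta_nonneg (x y : ℝ) : 0 ≤ eulerBeta x y := by
  apply intervalIntegral.integral_nonneg (by norm_num)
  intro u hu
  exact mul_nonneg (Real.rpow_nonneg hu.1 _) (Real.rpow_nonneg (by linarith [hu.2]) _)

lemma aeEq_of_eqOn {f g : ℝ → ℝ} {a b : ℝ} (hab : a ≤ b) (h : ∀ s ∈ Set.Ioc a b, f s = g s) :
    f =ᵐ[MeasureTheory.volume.restrict (Set.uIoc a b)] g := by
  rw [Set.uIoc_of_le hab]
  exact (MeasureTheory.ae_restrict_iff' measurableSet_Ioc).mpr (MeasureTheory.ae_of_all _ h)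

theorem stmt7 (σ α : ℝ) (hσ0 : 0 < σ) (hσ1 : σ < 1) (hα : 3 < α) (hα4 : α ≤ 4)
    (F : ℝ → ℝ) (hF : ContinuousOn F (Set.Ioc 0 1))
    (hFext : ContinuousOn (fun s : ℝ => s ^ σ * F s) (Set.Icc 0 1))
    (M : ℝ) (hM : ∀ s ∈ Set.Icc (0:ℝ) 1, |s ^ σ * F s| ≤ M) :
    ((∫ s in (0:ℝ)..1, greenG α 0 s * F s) = 0) ∧
    (∀ t ∈ Set.Icc (0:ℝ) 1,
      |∫ s in (0:ℝ)..1, greenG α t s * F s| ≤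
        M * (α - 1) * t ^ (α - 2) / Real.Gamma α * eulerBeta (1 - σ) (α - 1)
          + M * t ^ (α - σ) / Real.Gamma α * eulerBeta (1 - σ) α) ∧
    ContinuousWithinAt (fun t : ℝ => ∫ s in (0:ℝ)..1, greenG α t s * F s) (Set.Icc 0 1) 0 := by
  have hΓ : 0 < Real.Gamma α := Real.Gamma_pos_of_pos (by linarith)
  have hM0 : 0 ≤ M := le_trans (abs_nonneg _) (hM 1 (by norm_num))
  have hα2 : (0:ℝ) < α - 2 := by linarith
  have hα1 : (0:ℝ) < α - 1 := by linarith
  have hB1 : 0 ≤ eulerBeta (1 - σ) (α - 1) := eulerBeta_nonneg _ _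
  have hB2 : 0 ≤ eulerBeta (1 - σ) α := eulerBeta_nonneg _ _
  -- Part 1
  have h0 : (∫ s in (0:ℝ)..1, greenG α 0 s * F s) = 0 := by
    have hz : ∀ s ∈ Set.uIcc (0:ℝ) 1, greenG α 0 s * F s = (fun _ : ℝ => (0:ℝ)) s := by
      intro s hs
      rw [Set.uIcc_of_le (by norm_num : (0:ℝ) ≤ 1)] at hs
      have h2 : (0:ℝ) ^ (α - 2) = 0 := Real.zero_rpow (by linarith)
      simp only [greenG]
      rcases lt_or_eq_of_le hs.1 with h | h
      · rw [if_neg (not_le.mpr h)]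
        simp [h2]
      · rw [← h, if_pos le_rfl]
        simp [h2, Real.zero_rpow (show α - 1 ≠ 0 by linarith)]
    rw [intervalIntegral.integral_congr hz, intervalIntegral.integral_zero]
  -- Part 2
  have hbound : ∀ t ∈ Set.Icc (0:ℝ) 1,
      |∫ s in (0:ℝ)..1, greenG α t s * F s| ≤
        M * (α - 1) * t ^ (α - 2) / Real.Gamma α * eulerBeta (1 - σ) (α - 1)
          + M * t ^ (α - σ) / Real.Gamma α * eulerBeta (1 - σ) α := by
    intro t ht
    rcases eq_or_lt_of_le ht.1 with rfl | ht0
    · rw [h0, abs_zero, Real.zero_rpow (show α - 2 ≠ 0 by linarith),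
        Real.zero_rpow (show α - σ ≠ 0 by linarith)]
      simp
    · have ht1 : t ≤ 1 := ht.2
      set g1 : ℝ → ℝ := fun s => if s ≤ t then (t - s) ^ (α - 1) * s ^ (-σ) else 0 with hg1def
      set g2 : ℝ → ℝ := fun s => (1 - s) ^ (α - 2) * s ^ (-σ) with hg2def
      have hcont1 : Continuous fun s : ℝ => (t - s) ^ (α - 1) :=
        (Real.continuous_rpow_const (by linarith)).comp (continuous_const.sub continuous_id)
      have hcont2 : Continuous fun s : ℝ => (1 - s) ^ (α - 2) :=
        (Real.continuous_rpow_const (by linarith)).comp (continuous_const.sub continuous_id)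
      have hrint : ∀ a b : ℝ, IntervalIntegrable (fun s : ℝ => s ^ (-σ)) MeasureTheory.volume a b :=
        fun a b => intervalIntegral.intervalIntegrable_rpow' (by linarith)
      have hg2int : IntervalIntegrable g2 MeasureTheory.volume 0 1 :=
        (hrint 0 1).continuousOn_mul hcont2.continuousOn
      have hg1a : IntervalIntegrable g1 MeasureTheory.volume 0 t := by
        refine ((hrint 0 t).continuousOn_mul hcont1.continuousOn).congr_ae ?_
        refine (aeEq_of_eqOn ht0.le ?_).symm
        intro s hs
        simp only [hg1def, if_pos hs.2]
      have hg1b : IntervalIntegrable g1 MeasureTheory.volume t 1 := by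
        refine (intervalIntegrable_const (c := (0:ℝ))).congr_ae ?_
        refine (aeEq_of_eqOn ht1 ?_).symm
        intro s hs
        simp only [hg1def, if_neg (not_le.mpr hs.1)]
      have hg1int : IntervalIntegrable g1 MeasureTheory.volume 0 1 := hg1a.trans hg1b
      have hI1 : (∫ s in (0:ℝ)..1, g1 s) = t ^ (α - σ) * eulerBeta (1 - σ) α := by
        rw [← intervalIntegral.integral_add_adjacent_intervals hg1a hg1b]
        have e2 : (∫ s in t..1, g1 s) = 0 := by
          rw [intervalIntegral.integral_congr (g := fun _ : ℝ => (0:ℝ)) ?_,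
            intervalIntegral.integral_zero]
          intro s hs
          rw [Set.uIcc_of_le ht1] at hs
          rcases lt_or_eq_of_le hs.1 with h | h
          · simp only [hg1def, if_neg (not_le.mpr h)]
          · simp only [hg1def, ← h, if_pos le_rfl, sub_self,
              Real.zero_rpow (show α - 1 ≠ 0 by linarith), zero_mul]
        have e1 : (∫ s in (0:ℝ)..t, g1 s) = t ^ (α - σ) * eulerBeta (1 - σ) α := by
          have e1a : (∫ s in (0:ℝ)..t, g1 s)
              = ∫ s in (0:ℝ)..t, (t - s) ^ (α - 1) * s ^ (-σ) := by
            apply intervalIntegral.integral_congr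
            intro s hs
            rw [Set.uIcc_of_le ht0.le] at hs
            simp only [hg1def, if_pos hs.2]
          have hsub := intervalIntegral.smul_integral_comp_mul_left
            (f := fun s : ℝ => (t - s) ^ (α - 1) * s ^ (-σ)) (a := 0) (b := 1) t
          simp only [mul_zero, mul_one, smul_eq_mul] at hsub
          have e1b : (∫ u in (0:ℝ)..1, (t - t * u) ^ (α - 1) * (t * u) ^ (-σ))
              = (t ^ (α - 1) * t ^ (-σ)) * eulerBeta (1 - σ) α := by
            rw [show eulerBeta (1 - σ) α = ∫ u in (0:ℝ)..1, u ^ (-σ) * (1 - u) ^ (α - 1) by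
              simp only [eulerBeta, show (1:ℝ) - σ - 1 = -σ by ring],
              ← intervalIntegral.integral_const_mul]
            apply intervalIntegral.integral_congr
            intro u hu
            rw [Set.uIcc_of_le (by norm_num : (0:ℝ) ≤ 1)] at hu
            show (t - t * u) ^ (α - 1) * (t * u) ^ (-σ)
              = t ^ (α - 1) * t ^ (-σ) * (u ^ (-σ) * (1 - u) ^ (α - 1))
            rw [show t - t * u = t * (1 - u) by ring,
              Real.mul_rpow ht0.le (by linarith [hu.2]), Real.mul_rpow ht0.le hu.1]
            ring
          rw [e1a, ← hsub, e1b, show α - σ = 1 + ((α - 1) + -σ) by ring,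
            Real.rpow_add ht0, Real.rpow_add ht0, Real.rpow_one]
          ring
        rw [e1, e2, add_zero]
      have hI2 : (∫ s in (0:ℝ)..1, g2 s) = eulerBeta (1 - σ) (α - 1) := by
        simp only [eulerBeta, show (1:ℝ) - σ - 1 = -σ by ring, show α - 1 - 1 = α - 2 by ring]
        apply intervalIntegral.integral_congr
        intro s _
        simp only [hg2def]
        ring
      set gg : ℝ → ℝ := fun s => M / Real.Gamma α * (g1 s + (α - 1) * t ^ (α - 2) * g2 s)
        with hggdef
      have key : ∀ s ∈ Set.Ioc (0:ℝ) 1, ‖greenG α t s * F s‖ ≤ gg s := by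
        intro s hs
        have hs0 : 0 < s := hs.1
        have hs1 : s ≤ 1 := hs.2
        have hsσ : (0:ℝ) < s ^ σ := Real.rpow_pos_of_pos hs0 σ
        have hsneg : (0:ℝ) ≤ s ^ (-σ) := Real.rpow_nonneg hs0.le _
        have hFs : |F s| ≤ M * s ^ (-σ) := by
          have h1 : s ^ σ * |F s| ≤ M := by
            have := hM s ⟨hs0.le, hs1⟩
            rwa [abs_mul, abs_of_pos hsσ] at this
          rw [Real.rpow_neg hs0.le]
          calc |F s| = s ^ σ * |F s| / s ^ σ := by field_simp
          _ ≤ M / s ^ σ := by gcongr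
          _ = M * (s ^ σ)⁻¹ := div_eq_mul_inv _ _
        have hbr : |(s - t) + (α - 2) * (1 - t) * s| ≤ α - 1 := by
          have hp2 : (1 - t) * s ≤ 1 := mul_le_one₀ (by linarith) hs0.le hs1
          have hp3 : (α - 2) * ((1 - t) * s) ≤ α - 2 := by nlinarith
          have hp1 : 0 ≤ (α - 2) * ((1 - t) * s) :=
            mul_nonneg hα2.le (mul_nonneg (by linarith) hs0.le)
          rw [abs_le]
          constructor <;> nlinarith
        have hBn : (0:ℝ) ≤ (1 - s) ^ (α - 2) := Real.rpow_nonneg (by linarith) _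
        have hCn : (0:ℝ) ≤ t ^ (α - 2) := Real.rpow_nonneg ht0.le _
        have hterm : |(1 - s) ^ (α - 2) * t ^ (α - 2) * ((s - t) + (α - 2) * (1 - t) * s)|
            ≤ (α - 1) * ((1 - s) ^ (α - 2) * t ^ (α - 2)) := by
          calc |(1 - s) ^ (α - 2) * t ^ (α - 2) * ((s - t) + (α - 2) * (1 - t) * s)|
              = (1 - s) ^ (α - 2) * t ^ (α - 2) * |(s - t) + (α - 2) * (1 - t) * s| := by
                rw [abs_mul, abs_of_nonneg (mul_nonneg hBn hCn)]
          _ ≤ (1 - s) ^ (α - 2) * t ^ (α - 2) * (α - 1) :=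
                mul_le_mul_of_nonneg_left hbr (mul_nonneg hBn hCn)
          _ = (α - 1) * ((1 - s) ^ (α - 2) * t ^ (α - 2)) := by ring
        have hifnn : (0:ℝ) ≤ if s ≤ t then (t - s) ^ (α - 1) else 0 := by
          split_ifs with h
          · exact Real.rpow_nonneg (by linarith) _
          · exact le_rfl
        have hGb : |greenG α t s| ≤ ((if s ≤ t then (t - s) ^ (α - 1) else 0)
            + (α - 1) * ((1 - s) ^ (α - 2) * t ^ (α - 2))) / Real.Gamma α := by
          simp only [greenG]
          split_ifs with h
          · rw [abs_div, abs_of_pos hΓ]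
            rw [div_le_div_iff_of_pos_right hΓ]
            calc |(t - s) ^ (α - 1) + (1 - s) ^ (α - 2) * t ^ (α - 2) *
                  ((s - t) + (α - 2) * (1 - t) * s)|
                ≤ |(t - s) ^ (α - 1)| + |(1 - s) ^ (α - 2) * t ^ (α - 2) *
                  ((s - t) + (α - 2) * (1 - t) * s)| := abs_add_le _ _
            _ ≤ (t - s) ^ (α - 1) + (α - 1) * ((1 - s) ^ (α - 2) * t ^ (α - 2)) := by
                rw [abs_of_nonneg (Real.rpow_nonneg (by linarith) _)]
                exact add_le_add_right hterm _
          · rw [abs_div, abs_of_pos hΓ]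
            rw [div_le_div_iff_of_pos_right hΓ]
            calc |(1 - s) ^ (α - 2) * t ^ (α - 2) * ((s - t) + (α - 2) * (1 - t) * s)|
                ≤ (α - 1) * ((1 - s) ^ (α - 2) * t ^ (α - 2)) := hterm
            _ = 0 + (α - 1) * ((1 - s) ^ (α - 2) * t ^ (α - 2)) := by ring
        have hYnn : (0:ℝ) ≤ ((if s ≤ t then (t - s) ^ (α - 1) else 0)
            + (α - 1) * ((1 - s) ^ (α - 2) * t ^ (α - 2))) / Real.Gamma α :=
          div_nonneg (add_nonneg hifnn (mul_nonneg hα1.le (mul_nonneg hBn hCn))) hΓ.le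
        calc ‖greenG α t s * F s‖ = |greenG α t s| * |F s| := by
              rw [Real.norm_eq_abs, abs_mul]
        _ ≤ (((if s ≤ t then (t - s) ^ (α - 1) else 0)
              + (α - 1) * ((1 - s) ^ (α - 2) * t ^ (α - 2))) / Real.Gamma α) * (M * s ^ (-σ)) :=
            mul_le_mul hGb hFs (abs_nonneg _) hYnn
        _ = gg s := by
            simp only [hggdef, hg1def, hg2def]
            split_ifs with h
            · ring
            · ring
      have hggint : IntervalIntegrable gg MeasureTheory.volume 0 1 :=
        (hg1int.add (hg2int.const_mul _)).const_mul _
      have hae : ∀ᵐ s ∂(MeasureTheory.volume.restrict (Set.uIoc (0:ℝ) 1)),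
          ‖greenG α t s * F s‖ ≤ gg s := by
        rw [Set.uIoc_of_le (by norm_num : (0:ℝ) ≤ 1)]
        exact (MeasureTheory.ae_restrict_iff' measurableSet_Ioc).mpr
          (MeasureTheory.ae_of_all _ key)
      have hnorm := intervalIntegral.norm_integral_le_abs_of_norm_le hae hggint
      have hIgg : (∫ s in (0:ℝ)..1, gg s)
          = M / Real.Gamma α * (t ^ (α - σ) * eulerBeta (1 - σ) α
            + (α - 1) * t ^ (α - 2) * eulerBeta (1 - σ) (α - 1)) := by
        simp only [hggdef]
        rw [intervalIntegral.integral_const_mul,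
          intervalIntegral.integral_add hg1int (hg2int.const_mul _),
          intervalIntegral.integral_const_mul, hI1, hI2]
      have habs : |∫ s in (0:ℝ)..1, gg s|
          = M / Real.Gamma α * (t ^ (α - σ) * eulerBeta (1 - σ) α
            + (α - 1) * t ^ (α - 2) * eulerBeta (1 - σ) (α - 1)) := by
        rw [hIgg, abs_of_nonneg]
        exact mul_nonneg (div_nonneg hM0 hΓ.le)
          (add_nonneg (mul_nonneg (Real.rpow_nonneg ht0.le _) hB2)
            (mul_nonneg (mul_nonneg hα1.le (Real.rpow_nonneg ht0.le _)) hB1))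
      rw [← Real.norm_eq_abs]
      refine le_trans hnorm ?_
      rw [habs]
      apply le_of_eq
      ring
  refine ⟨h0, hbound, ?_⟩
  -- Part 3
  have hc2 : ContinuousAt (fun t : ℝ => t ^ (α - 2)) 0 :=
    Real.continuousAt_rpow_const 0 (α - 2) (Or.inr (by linarith))
  have hcσ : ContinuousAt (fun t : ℝ => t ^ (α - σ)) 0 :=
    Real.continuousAt_rpow_const 0 (α - σ) (Or.inr (by linarith))
  have hgc : ContinuousAt (fun t : ℝ =>
      M * (α - 1) * t ^ (α - 2) / Real.Gamma α * eulerBeta (1 - σ) (α - 1)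
        + M * t ^ (α - σ) / Real.Gamma α * eulerBeta (1 - σ) α) 0 := by
    exact ((((hc2.const_mul (M * (α - 1))).div_const _).mul_const _).add
      (((hcσ.const_mul M).div_const _).mul_const _))
  have hval : (M * (α - 1) * (0:ℝ) ^ (α - 2) / Real.Gamma α * eulerBeta (1 - σ) (α - 1)
        + M * (0:ℝ) ^ (α - σ) / Real.Gamma α * eulerBeta (1 - σ) α) = 0 := by
    rw [Real.zero_rpow (show α - 2 ≠ 0 by linarith),
      Real.zero_rpow (show α - σ ≠ 0 by linarith)]
    ring
  unfold ContinuousWithinAt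
  rw [show (fun t : ℝ => ∫ s in (0:ℝ)..1, greenG α t s * F s) 0 = 0 from h0]
  apply squeeze_zero_norm' (a := fun t : ℝ =>
      M * (α - 1) * t ^ (α - 2) / Real.Gamma α * eulerBeta (1 - σ) (α - 1)
        + M * t ^ (α - σ) / Real.Gamma α * eulerBeta (1 - σ) α)
  · filter_upwards [self_mem_nhdsWithin] with t ht
    rw [Real.norm_eq_abs]
    exact hbound t ht
  · have := hgc.tendsto.mono_left (nhdsWithin_le_nhds (s := Set.Icc (0:ℝ) 1))
    rwa [hval] at this
end

section
/- Let 0 < σ < 1, 3 < α ≤ 4, and F : (0,1] → ℝ continuous such that s ↦ s^σ F(s) extends continuously to [0,1]. Then the function H(t) = ∫₀¹ G(t,s) F(s) ds is continuous on [0,1], where G is the Green's function for the fractional boundary value problem. -/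
open Real

lemma greenG_eq (α t s : ℝ) (hα : 3 < α) :
    greenG α t s = ((max (t - s) 0) ^ (α - 1)
      + (1 - s) ^ (α - 2) * t ^ (α - 2) * ((s - t) + (α - 2) * (1 - t) * s)) / Real.Gamma α := by
  unfold greenG
  rcases le_or_gt s t with h | h
  · rw [if_pos h, max_eq_left (by linarith)]
  · rw [if_neg (not_le.mpr h), max_eq_right (by linarith),
      Real.zero_rpow (by intro h'; nlinarith [sub_eq_zero.mp h']), zero_add]

lemma greenG_cont (α : ℝ) (hα : 3 < α) :
    Continuous (fun p : ℝ × ℝ => greenG α p.1 p.2) := by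
  have h1 : (0:ℝ) ≤ α - 1 := by linarith
  have h2 : (0:ℝ) ≤ α - 2 := by linarith
  have heq : (fun p : ℝ × ℝ => greenG α p.1 p.2)
      = fun p : ℝ × ℝ => ((max (p.1 - p.2) 0) ^ (α - 1)
        + (1 - p.2) ^ (α - 2) * p.1 ^ (α - 2)
          * ((p.2 - p.1) + (α - 2) * (1 - p.1) * p.2)) / Real.Gamma α := by
    funext p; exact greenG_eq α p.1 p.2 hα
  rw [heq]
  apply Continuous.div_const
  refine Continuous.add ?_ ?_
  · exact ((continuous_fst.sub continuous_snd).max continuous_const).rpow_const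
      (fun p => Or.inr h1)
  · refine (Continuous.mul ?_ ?_).mul ?_
    · exact (continuous_const.sub continuous_snd).rpow_const (fun p => Or.inr h2)
    · exact continuous_fst.rpow_const (fun p => Or.inr h2)
    · continuity

theorem stmt8 (σ α : ℝ) (hσ0 : 0 < σ) (hσ1 : σ < 1) (hα : 3 < α) (hα4 : α ≤ 4)
    (F : ℝ → ℝ) (hF : ContinuousOn F (Set.Ioc 0 1))
    (hFext : ∃ g : ℝ → ℝ, ContinuousOn g (Set.Icc 0 1) ∧
      ∀ s ∈ Set.Ioc (0:ℝ) 1, g s = s ^ σ * F s) :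
    ContinuousOn (fun t : ℝ => ∫ s in (0:ℝ)..1, greenG α t s * F s) (Set.Icc 0 1) := by
  obtain ⟨g, hg, hgF⟩ := hFext
  have hGc := greenG_cont α hα
  -- bound on g
  obtain ⟨Cg, hCg⟩ := isCompact_Icc.exists_bound_of_continuousOn hg
  -- bound on G on [0,1]^2
  obtain ⟨CG, hCG⟩ := (isCompact_Icc.prod isCompact_Icc).exists_bound_of_continuousOn
    (hGc.continuousOn : ContinuousOn _ ((Set.Icc (0:ℝ) 1) ×ˢ (Set.Icc (0:ℝ) 1)))
  have hCG0 : 0 ≤ CG := le_trans (norm_nonneg _) (hCG (0, 0) (by norm_num))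
  have hCg0 : 0 ≤ Cg := le_trans (norm_nonneg _) (hCg 0 (by norm_num))
  simp only [intervalIntegral.integral_of_le (zero_le_one)]
  intro t ht
  apply MeasureTheory.continuousWithinAt_of_dominated
    (bound := fun s => CG * (Cg * s ^ (-σ)))
  · filter_upwards with x
    exact ((hGc.comp (Continuous.prodMk_right x)).continuousOn.mul hF).aestronglyMeasurable
      measurableSet_Ioc
  · filter_upwards [eventually_mem_nhdsWithin] with x hx
    rw [MeasureTheory.ae_restrict_iff' measurableSet_Ioc]
    filter_upwards with s hs
    have hs0 : 0 < s := hs.1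
    have hFs : F s = s ^ (-σ) * g s := by
      rw [hgF s hs, ← mul_assoc, ← Real.rpow_add hs0, neg_add_cancel, Real.rpow_zero,
        one_mul]
    rw [Real.norm_eq_abs, abs_mul, hFs, abs_mul]
    have h1 : |greenG α x s| ≤ CG := by
      have := hCG (x, s) (Set.mk_mem_prod hx (Set.mem_Icc.mpr ⟨hs0.le, hs.2⟩))
      simpa [Real.norm_eq_abs] using this
    have h2 : |g s| ≤ Cg := by
      have := hCg s (Set.mem_Icc.mpr ⟨hs0.le, hs.2⟩)
      simpa [Real.norm_eq_abs] using this
    have h3 : |s ^ (-σ)| = s ^ (-σ) := abs_of_nonneg (Real.rpow_nonneg hs0.le _)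
    calc |greenG α x s| * (|s ^ (-σ)| * |g s|)
        ≤ CG * (|s ^ (-σ)| * |g s|) := by
          apply mul_le_mul_of_nonneg_right h1 (by positivity)
      _ ≤ CG * (s ^ (-σ) * Cg) := by
          rw [h3]
          apply mul_le_mul_of_nonneg_left
            (mul_le_mul_of_nonneg_left h2 (Real.rpow_nonneg hs0.le _)) hCG0
      _ = CG * (Cg * s ^ (-σ)) := by ring
  · have : MeasureTheory.IntegrableOn (fun s : ℝ => s ^ (-σ)) (Set.Ioc 0 1) := by
      have h : (-1:ℝ) < -σ := by linarith
      exact (intervalIntegral.intervalIntegrable_rpow' (a := 0) (b := 1) h).1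
    exact (this.const_mul Cg).const_mul CG
  · filter_upwards with s
    exact ((hGc.comp (continuous_id.prodMk continuous_const)).mul
      continuous_const).continuousWithinAt
end

section
/- Let 0 < σ < 1 and 3 < α ≤ 4. Then for every t ∈ [0,1], ∫₀¹ G(t,s) s^(−σ) ds = (1/Γ(α)) [t^(α−σ) B(1−σ,α) − t^(α−1)(B(1−σ,α−1) + (α−2)B(2−σ,α−1)) + (α−1) t^(α−2) B(2−σ,α−1)], where G is the Green's function and B the Beta function. -/
open Real

lemma subst_lemma (σ α t : ℝ) (hσ0 : 0 < σ) (ht0 : 0 < t) :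
    (∫ s in (0:ℝ)..t, (t - s) ^ (α - 1) * s ^ (-σ)) = t ^ (α - σ) * eulerBeta (1 - σ) α := by
  have hbeta : eulerBeta (1 - σ) α = ∫ u in (0:ℝ)..1, u ^ (-σ) * (1 - u) ^ (α - 1) := by
    unfold eulerBeta; norm_num
  have key : (∫ s in (0:ℝ)..t, (t - s) ^ (α - 1) * s ^ (-σ))
      = t • ∫ u in (0:ℝ)..1, (t - t * u) ^ (α - 1) * (t * u) ^ (-σ) := by
    rw [intervalIntegral.smul_integral_comp_mul_left
      (fun s => (t - s) ^ (α - 1) * s ^ (-σ)) t, mul_zero, mul_one]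
  rw [key, smul_eq_mul, ← intervalIntegral.integral_const_mul]
  rw [show (∫ u in (0:ℝ)..1, t * ((t - t * u) ^ (α - 1) * (t * u) ^ (-σ)))
      = ∫ u in (0:ℝ)..1, t ^ (α - σ) * (u ^ (-σ) * (1 - u) ^ (α - 1)) from
    intervalIntegral.integral_congr ?_]
  · rw [intervalIntegral.integral_const_mul, hbeta]
  · intro u hu
    rw [Set.uIcc_of_le (by norm_num : (0:ℝ) ≤ 1)] at hu
    obtain ⟨hu0, hu1⟩ := hu
    simp only []
    have h1 : t - t * u = t * (1 - u) := by ring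
    rw [h1, Real.mul_rpow ht0.le (by linarith), Real.mul_rpow ht0.le hu0]
    have h2 : t * (t ^ (α - 1) * (1 - u) ^ (α - 1) * (t ^ (-σ) * u ^ (-σ)))
        = (t * (t ^ (α - 1) * t ^ (-σ))) * (u ^ (-σ) * (1 - u) ^ (α - 1)) := by ring
    rw [h2]
    congr 1
    rw [← Real.rpow_add ht0]
    have h3 := Real.rpow_add ht0 1 (α - 1 + -σ)
    rw [Real.rpow_one] at h3
    rw [← h3]
    congr 1
    ring

theorem stmt9 (σ α : ℝ) (hσ0 : 0 < σ) (hσ1 : σ < 1) (hα : 3 < α) (hα4 : α ≤ 4)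
    (t : ℝ) (ht : t ∈ Set.Icc (0:ℝ) 1) :
    (∫ s in (0:ℝ)..1, greenG α t s * s ^ (-σ)) =
      (1 / Real.Gamma α) *
        (t ^ (α - σ) * eulerBeta (1 - σ) α
          - t ^ (α - 1) * (eulerBeta (1 - σ) (α - 1) + (α - 2) * eulerBeta (2 - σ) (α - 1))
          + (α - 1) * t ^ (α - 2) * eulerBeta (2 - σ) (α - 1)) := by
  obtain ⟨ht0, ht1⟩ := ht
  rcases eq_or_lt_of_le ht0 with h0 | htpos
  · -- case t = 0
    subst h0
    have e1 : (0:ℝ) ^ (α - σ) = 0 := Real.zero_rpow (by intro h; linarith [le_of_eq h] : α - σ ≠ 0)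
    have e2 : (0:ℝ) ^ (α - 1) = 0 := Real.zero_rpow (by intro h; nlinarith [h] : α - 1 ≠ 0)
    have e3 : (0:ℝ) ^ (α - 2) = 0 := Real.zero_rpow (by intro h; nlinarith [h] : α - 2 ≠ 0)
    have hz : ∀ s ∈ Set.uIcc (0:ℝ) 1, greenG α 0 s * s ^ (-σ) = (0:ℝ) := by
      intro s hs
      rw [Set.uIcc_of_le (by norm_num : (0:ℝ) ≤ 1)] at hs
      unfold greenG
      by_cases h : s ≤ 0
      · have hs0 : s = 0 := le_antisymm h hs.1
        subst hs0
        simp [e2, e3, Real.zero_rpow (ne_of_gt (by linarith : (0:ℝ) < α - 1))]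
      · simp [h, e3]
    rw [intervalIntegral.integral_congr hz]
    simp [e1, e2, e3]
  · -- case 0 < t
    set F : ℝ → ℝ := fun s => (t - s) ^ (α - 1) * s ^ (-σ) with hFdef
    set C : ℝ → ℝ := fun s => (1 - s) ^ (α - 2) * t ^ (α - 2) * ((s - t) + (α - 2) * (1 - t) * s) * s ^ (-σ) with hCdef
    have heq : ∀ s, greenG α t s * s ^ (-σ)
        = (Set.indicator {x | x ≤ t} F s + C s) * (1 / Real.Gamma α) := by
      intro s
      unfold greenG
      by_cases h : s ≤ t
      · simp only [if_pos h, Set.indicator_of_mem (by exact h : s ∈ {x | x ≤ t}), hFdef, hCdef]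
        ring
      · simp only [if_neg h, Set.indicator_of_notMem (by exact h : s ∉ {x | x ≤ t}), hCdef]
        ring
    simp only [heq]
    rw [intervalIntegral.integral_mul_const]
    -- integrability
    have hrpow : IntervalIntegrable (fun s : ℝ => s ^ (-σ)) MeasureTheory.volume 0 1 :=
      intervalIntegral.intervalIntegrable_rpow' (by linarith)
    have hrpow2 : IntervalIntegrable (fun s : ℝ => s ^ (1 - σ)) MeasureTheory.volume 0 1 :=
      intervalIntegral.intervalIntegrable_rpow' (by linarith)
    have hcont1 : Continuous fun s : ℝ => (t - s) ^ (α - 1) :=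
      (Real.continuous_rpow_const (by linarith)).comp (continuous_const.sub continuous_id)
    have hcont2 : Continuous fun s : ℝ => (1 - s) ^ (α - 2) :=
      (Real.continuous_rpow_const (by linarith)).comp (continuous_const.sub continuous_id)
    have hcont3 : Continuous fun s : ℝ => (1 - s) ^ (α - 2) * t ^ (α - 2) * ((s - t) + (α - 2) * (1 - t) * s) :=
      (hcont2.mul continuous_const).mul (by continuity)
    have hF : IntervalIntegrable F MeasureTheory.volume 0 1 :=
      hrpow.continuousOn_mul hcont1.continuousOn
    have hC : IntervalIntegrable C MeasureTheory.volume 0 1 :=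
      hrpow.continuousOn_mul hcont3.continuousOn
    have hInd : IntervalIntegrable (Set.indicator {x | x ≤ t} F) MeasureTheory.volume 0 1 := by
      rw [intervalIntegrable_iff] at hF ⊢
      exact hF.indicator measurableSet_Iic
    rw [intervalIntegral.integral_add hInd hC]
    have hIndInt : (∫ s in (0:ℝ)..1, Set.indicator {x | x ≤ t} F s)
        = t ^ (α - σ) * eulerBeta (1 - σ) α := by
      rw [intervalIntegral.integral_indicator ⟨ht0, ht1⟩]
      exact subst_lemma σ α t hσ0 htpos
    -- the C integral
    have hCeq : ∀ s ∈ Set.uIcc (0:ℝ) 1,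
        C s = (t ^ (α - 2) * (1 + (α - 2) * (1 - t))) * ((1 - s) ^ (α - 2) * s ^ (1 - σ))
          + (-(t ^ (α - 2) * t)) * ((1 - s) ^ (α - 2) * s ^ (-σ)) := by
      intro s hs
      rw [Set.uIcc_of_le (by norm_num : (0:ℝ) ≤ 1)] at hs
      have hss : s ^ (1 - σ) = s * s ^ (-σ) := by
        rcases eq_or_lt_of_le hs.1 with h | h
        · rw [← h, Real.zero_rpow (by linarith), zero_mul]
        · rw [show (1 - σ) = 1 + -σ by ring, Real.rpow_add h, Real.rpow_one]
      rw [hss, hCdef]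
      ring
    have hi1 : IntervalIntegrable (fun s : ℝ => (t ^ (α - 2) * (1 + (α - 2) * (1 - t))) * ((1 - s) ^ (α - 2) * s ^ (1 - σ))) MeasureTheory.volume 0 1 :=
      (hrpow2.continuousOn_mul hcont2.continuousOn).const_mul _
    have hi2 : IntervalIntegrable (fun s : ℝ => (-(t ^ (α - 2) * t)) * ((1 - s) ^ (α - 2) * s ^ (-σ))) MeasureTheory.volume 0 1 :=
      (hrpow.continuousOn_mul hcont2.continuousOn).const_mul _
    have hb1 : (∫ s in (0:ℝ)..1, (1 - s) ^ (α - 2) * s ^ (-σ)) = eulerBeta (1 - σ) (α - 1) := by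
      unfold eulerBeta
      rw [show (1 - σ - 1) = -σ by ring, show (α - 1 - 1) = α - 2 by ring]
      exact intervalIntegral.integral_congr fun s _ => mul_comm _ _
    have hb2 : (∫ s in (0:ℝ)..1, (1 - s) ^ (α - 2) * s ^ (1 - σ)) = eulerBeta (2 - σ) (α - 1) := by
      unfold eulerBeta
      rw [show (2 - σ - 1) = 1 - σ by ring, show (α - 1 - 1) = α - 2 by ring]
      exact intervalIntegral.integral_congr fun s _ => mul_comm _ _
    have hCint : (∫ s in (0:ℝ)..1, C s)
        = (t ^ (α - 2) * (1 + (α - 2) * (1 - t))) * eulerBeta (2 - σ) (α - 1)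
          + (-(t ^ (α - 2) * t)) * eulerBeta (1 - σ) (α - 1) := by
      rw [intervalIntegral.integral_congr hCeq, intervalIntegral.integral_add hi1 hi2,
        intervalIntegral.integral_const_mul, intervalIntegral.integral_const_mul, hb1, hb2]
    rw [hIndInt, hCint]
    have htt : t ^ (α - 1) = t ^ (α - 2) * t := by
      rw [show α - 1 = (α - 2) + 1 by ring, Real.rpow_add htpos, Real.rpow_one]
    rw [htt]
    ring
end

section
/- Let (X,d) be a complete metric space and T : X → X a mapping such that there exist τ > 0 and φ : (0,∞) → ℝ satisfying: φ is strictly increasing; for every sequence (tₙ) in (0,∞), tₙ → 0 iff φ(tₙ) → −∞; there exists k ∈ (0,1) with t^k φ(t) → 0 as t → 0⁺; and for all x, y ∈ X with d(Tx,Ty) > 0, τ + φ(d(Tx,Ty)) ≤ φ(d(x,y)). Then T has a unique fixed point. -/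
open Filter

theorem stmt16 {X : Type*} [MetricSpace X] [CompleteSpace X] [Nonempty X]
    (T : X → X) (τ : ℝ) (hτ : 0 < τ) (φ : ℝ → ℝ)
    (hmono : StrictMonoOn φ (Set.Ioi 0))
    (hseq : ∀ t : ℕ → ℝ, (∀ n, 0 < t n) →
      (Tendsto t atTop (nhds 0) ↔ Tendsto (fun n => φ (t n)) atTop atBot))
    (hk : ∃ k ∈ Set.Ioo (0:ℝ) 1,
      Tendsto (fun t : ℝ => t ^ k * φ t) (nhdsWithin 0 (Set.Ioi 0)) (nhds 0))
    (hcontr : ∀ x y : X, 0 < dist (T x) (T y) →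
      τ + φ (dist (T x) (T y)) ≤ φ (dist x y)) :
    ∃! x : X, T x = x := by
  -- uniqueness
  have huniq : ∀ x y : X, T x = x → T y = y → x = y := by
    intro x y hx hy
    by_contra hne
    have hd : 0 < dist x y := dist_pos.2 hne
    have hd' : 0 < dist (T x) (T y) := by rwa [hx, hy]
    have hc := hcontr x y hd'
    rw [hx, hy] at hc
    linarith
  -- T is 1-Lipschitz
  have hlip : ∀ x y : X, dist (T x) (T y) ≤ dist x y := by
    intro x y
    rcases (dist_nonneg : (0:ℝ) ≤ dist (T x) (T y)).eq_or_lt with h | h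
    · rw [← h]; exact dist_nonneg
    · have hxy : 0 < dist x y := by
        rcases (dist_nonneg : (0:ℝ) ≤ dist x y).eq_or_lt with h' | h'
        · exfalso
          have hxy' : x = y := dist_eq_zero.1 h'.symm
          rw [hxy'] at h
          simp at h
        · exact h'
      have hc := hcontr x y h
      have hlt : φ (dist (T x) (T y)) < φ (dist x y) := by linarith
      exact le_of_lt ((hmono.lt_iff_lt h hxy).1 hlt)
  obtain ⟨x₀⟩ := (inferInstance : Nonempty X)
  set f : ℕ → X := fun n => T^[n] x₀ with hfdef
  have hf : ∀ n, f (n + 1) = T (f n) := fun n => Function.iterate_succ_apply' T n x₀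
  by_cases hall : ∀ n, 0 < dist (f n) (f (n + 1))
  · -- all steps positive
    set d : ℕ → ℝ := fun n => dist (f n) (f (n + 1)) with hddef
    have hstep : ∀ n, τ + φ (d (n + 1)) ≤ φ (d n) := by
      intro n
      have hpos : 0 < dist (T (f n)) (T (f (n + 1))) := by
        rw [← hf, ← hf]; exact hall (n + 1)
      have := hcontr (f n) (f (n + 1)) hpos
      rwa [← hf, ← hf] at this
    have hbound : ∀ n, φ (d n) ≤ φ (d 0) - n * τ := by
      intro n
      induction n with
      | zero => simp
      | succ n ih =>
        have := hstep n
        push_cast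
        linarith
    have hφtend : Tendsto (fun n => φ (d n)) atTop atBot := by
      apply tendsto_atBot_mono hbound
      have h1 : Tendsto (fun n : ℕ => (n : ℝ) * τ) atTop atTop :=
        tendsto_natCast_atTop_atTop.atTop_mul_const hτ
      have h2 : Tendsto (fun n : ℕ => -((n : ℝ) * τ)) atTop atBot :=
        tendsto_neg_atTop_atBot.comp h1
      simpa [sub_eq_add_neg] using tendsto_atBot_add_const_left atTop (φ (d 0)) h2
    have hd0 : Tendsto d atTop (nhds 0) := (hseq d hall).2 hφtend
    obtain ⟨k, ⟨hk0, hk1⟩, hktend⟩ := hk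
    have hdw : Tendsto d atTop (nhdsWithin 0 (Set.Ioi 0)) :=
      tendsto_nhdsWithin_of_tendsto_nhds_of_eventually_within d hd0
        (Eventually.of_forall hall)
    have h2 : Tendsto (fun n => d n ^ k * φ (d n)) atTop (nhds 0) := hktend.comp hdw
    have hdk : Tendsto (fun n => d n ^ k) atTop (nhds 0) := by
      have := hd0.rpow_const (p := k) (Or.inr hk0.le)
      simpa [Real.zero_rpow hk0.ne'] using this
    have h3 : Tendsto (fun n => d n ^ k * φ (d 0)) atTop (nhds 0) := by
      simpa using hdk.mul_const (φ (d 0))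
    have h4 : Tendsto (fun n => d n ^ k * (φ (d 0) - φ (d n))) atTop (nhds 0) := by
      have := h3.sub h2
      simpa [mul_sub] using this
    have hev : ∀ᶠ n : ℕ in atTop, d n ^ k * (φ (d 0) - φ (d n)) < τ :=
      h4.eventually_lt_const hτ
    -- eventually d n ≤ n ^ (-(1/k))
    have hbig : ∀ᶠ n : ℕ in atTop, d n ≤ (n : ℝ) ^ (-(1 / k)) := by
      filter_upwards [hev, eventually_ge_atTop 1] with n hn hn1
      have hnpos : (0 : ℝ) < n := by exact_mod_cast hn1
      have hdkpos : 0 < d n ^ k := Real.rpow_pos_of_pos (hall n) k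
      have hb : (n : ℝ) * τ ≤ φ (d 0) - φ (d n) := by
        have := hbound n; linarith
      have hmul : d n ^ k * ((n : ℝ) * τ) ≤ d n ^ k * (φ (d 0) - φ (d n)) :=
        mul_le_mul_of_nonneg_left hb hdkpos.le
      have h5 : d n ^ k * ((n : ℝ) * τ) < τ := lt_of_le_of_lt hmul hn
      have h6 : d n ^ k ≤ 1 / n := by
        rw [le_div_iff₀ hnpos]
        nlinarith
      have h7 : (d n ^ k) ^ (1 / k) ≤ (1 / (n : ℝ)) ^ (1 / k) :=
        Real.rpow_le_rpow hdkpos.le h6 (by positivity)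
      have h8 : (d n ^ k) ^ (1 / k) = d n := by
        rw [← Real.rpow_mul (hall n).le, mul_one_div_cancel hk0.ne', Real.rpow_one]
      have h9 : (1 / (n : ℝ)) ^ (1 / k) = (n : ℝ) ^ (-(1 / k)) := by
        rw [one_div, ← Real.rpow_neg_one (n : ℝ), ← Real.rpow_mul (le_of_lt hnpos)]
        norm_num
      rw [h8, h9] at h7
      exact h7
    have hgsum : Summable (fun n : ℕ => (n : ℝ) ^ (-(1 / k))) := by
      rw [Real.summable_nat_rpow]
      have : 1 < 1 / k := one_lt_one_div hk0 hk1
      linarith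
    obtain ⟨N, hN⟩ := eventually_atTop.1 hbig
    have hsum' : Summable (fun n : ℕ => d (n + N)) := by
      apply Summable.of_nonneg_of_le (fun n => dist_nonneg)
        (fun n => hN (n + N) (Nat.le_add_left N n))
      exact (summable_nat_add_iff N).2 hgsum
    have hsum : Summable d := (summable_nat_add_iff N).1 hsum'
    have hcauchy : CauchySeq f := cauchySeq_of_summable_dist hsum
    obtain ⟨x, hx⟩ := cauchySeq_tendsto_of_complete hcauchy
    have hcont : Continuous T :=
      (LipschitzWith.of_dist_le_mul (K := 1) fun a b => by
        simpa using hlip a b).continuous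
    have hTx : Tendsto (fun n => f (n + 1)) atTop (nhds (T x)) := by
      have := (hcont.tendsto x).comp hx
      simpa [Function.comp_def, hf] using this
    have hx' : Tendsto (fun n => f (n + 1)) atTop (nhds x) :=
      hx.comp (tendsto_add_atTop_nat 1)
    have hfix : T x = x := tendsto_nhds_unique hTx hx'
    exact ⟨x, hfix, fun y hy => huniq y x hy hfix⟩
  · push_neg at hall
    obtain ⟨n, hn⟩ := hall
    have h0 : dist (f n) (f (n + 1)) = 0 := le_antisymm hn dist_nonneg
    have hfix : T (f n) = f n := by
      have := dist_eq_zero.1 h0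
      rw [hf n] at this
      exact this.symm
    exact ⟨f n, hfix, fun y hy => huniq y (f n) hy hfix⟩
end

section
/- Let (X,d) be a complete metric space, τ > 0, and T : X → X a mapping such that d(Tx,Ty) ≤ d(x,y)/(1 + τ√(d(x,y)))² whenever d(Tx,Ty) > 0. Then T has a unique fixed point in X. -/
theorem stmt17 {X : Type*} [MetricSpace X] [CompleteSpace X] [Nonempty X]
    (T : X → X) (τ : ℝ) (hτ : 0 < τ)
    (hcontr : ∀ x y : X, 0 < dist (T x) (T y) →
      dist (T x) (T y) ≤ dist x y / (1 + τ * Real.sqrt (dist x y)) ^ 2) :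
    ∃! x : X, T x = x := by
  -- T is nonexpansive
  have hne : ∀ a b : X, dist (T a) (T b) ≤ dist a b := by
    intro a b
    rcases eq_or_lt_of_le (dist_nonneg (x := T a) (y := T b)) with h | h
    · rw [← h]; exact dist_nonneg
    · have hc := hcontr a b h
      have hs : 0 ≤ Real.sqrt (dist a b) := Real.sqrt_nonneg _
      have hd : 0 ≤ dist a b := dist_nonneg
      have hden : (0:ℝ) < (1 + τ * Real.sqrt (dist a b)) ^ 2 := by positivity
      calc dist (T a) (T b) ≤ dist a b / (1 + τ * Real.sqrt (dist a b)) ^ 2 := hc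
        _ ≤ dist a b / 1 := by
            apply div_le_div_of_nonneg_left hd one_pos
            nlinarith [mul_nonneg hτ.le hs]
        _ = dist a b := div_one _
  -- key inequality on reciprocals of square roots
  have key : ∀ a b : X, 0 < dist (T a) (T b) →
      1 / Real.sqrt (dist a b) + τ ≤ 1 / Real.sqrt (dist (T a) (T b)) := by
    intro a b h
    set d' := dist (T a) (T b) with hd'
    set d := dist a b with hdd
    have hd : 0 < d := lt_of_lt_of_le h (hne a b)
    have hsd : 0 < Real.sqrt d := Real.sqrt_pos.mpr hd
    have hsd' : 0 < Real.sqrt d' := Real.sqrt_pos.mpr h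
    have hden : 0 < 1 + τ * Real.sqrt d := by positivity
    have hc := hcontr a b h
    have h1 : Real.sqrt d' ≤ Real.sqrt d / (1 + τ * Real.sqrt d) := by
      have heq : Real.sqrt (d / (1 + τ * Real.sqrt d) ^ 2)
          = Real.sqrt d / (1 + τ * Real.sqrt d) := by
        rw [Real.sqrt_div hd.le, Real.sqrt_sq hden.le]
      calc Real.sqrt d' ≤ Real.sqrt (d / (1 + τ * Real.sqrt d) ^ 2) :=
            Real.sqrt_le_sqrt hc
        _ = Real.sqrt d / (1 + τ * Real.sqrt d) := heq
    have h2 : (1 + τ * Real.sqrt d) / Real.sqrt d ≤ 1 / Real.sqrt d' := by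
      rw [div_le_div_iff₀ (by positivity) hsd']
      have := mul_le_mul_of_nonneg_left h1 hden.le
      rw [mul_div_cancel₀ _ (ne_of_gt hden)] at this
      linarith [mul_comm (1 + τ * Real.sqrt d) (Real.sqrt d')]
    calc 1 / Real.sqrt d + τ = (1 + τ * Real.sqrt d) / Real.sqrt d := by
          field_simp
      _ ≤ 1 / Real.sqrt d' := h2
  -- Picard iterates
  obtain ⟨x₀⟩ := ‹Nonempty X›
  set f : ℕ → X := fun n => T^[n] x₀ with hf
  have hsucc : ∀ n, f (n + 1) = T (f n) := by
    intro n; simp [hf, Function.iterate_succ_apply']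
  have hexists : ∃ x : X, T x = x := by
    by_cases hfix : ∃ n, T (f n) = f n
    · obtain ⟨n, hn⟩ := hfix; exact ⟨f n, hn⟩
    push_neg at hfix
    have hdpos : ∀ n, 0 < dist (f n) (f (n + 1)) := by
      intro n
      rw [hsucc n, dist_pos]
      exact fun h => hfix n h.symm
    set s₀ : ℝ := 1 / Real.sqrt (dist (f 0) (f 1)) with hs₀
    have hs₀pos : 0 < s₀ := by
      apply one_div_pos.mpr
      exact Real.sqrt_pos.mpr (hdpos 0)
    have hlow : ∀ n, s₀ + n * τ ≤ 1 / Real.sqrt (dist (f n) (f (n + 1))) := by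
      intro n
      induction n with
      | zero => simp [hs₀]
      | succ n ih =>
        have hk := key (f n) (f (n + 1)) (by
          rw [← hsucc n, ← hsucc (n + 1)]; exact hdpos (n + 1))
        rw [← hsucc n, ← hsucc (n + 1)] at hk
        push_cast
        nlinarith
    have hbound : ∀ n, dist (f n) (f (n + 1)) ≤ 1 / (s₀ + n * τ) ^ 2 := by
      intro n
      have hpos : 0 < s₀ + n * τ := by positivity
      have hsq : Real.sqrt (dist (f n) (f (n + 1))) ≤ 1 / (s₀ + n * τ) := by
        have hsp := Real.sqrt_pos.mpr (hdpos n)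
        rw [le_div_iff₀ hpos]
        calc Real.sqrt (dist (f n) (f (n + 1))) * (s₀ + n * τ)
            ≤ Real.sqrt (dist (f n) (f (n + 1))) * (1 / Real.sqrt (dist (f n) (f (n + 1)))) :=
              mul_le_mul_of_nonneg_left (hlow n) hsp.le
          _ = 1 := mul_one_div_cancel (ne_of_gt hsp)
      calc dist (f n) (f (n + 1))
          = Real.sqrt (dist (f n) (f (n + 1))) ^ 2 := by
            rw [Real.sq_sqrt dist_nonneg]
        _ ≤ (1 / (s₀ + n * τ)) ^ 2 := by
            apply pow_le_pow_left₀ (Real.sqrt_nonneg _) hsq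
        _ = 1 / (s₀ + n * τ) ^ 2 := by rw [div_pow, one_pow]
    -- summability
    set m : ℝ := min s₀ τ with hm
    have hmpos : 0 < m := lt_min hs₀pos hτ
    have hbound2 : ∀ n : ℕ, dist (f n) (f (n + 1)) ≤ (1 / m ^ 2) * (1 / ((n : ℝ) + 1) ^ 2) := by
      intro n
      have h1 : m * ((n : ℝ) + 1) ≤ s₀ + n * τ := by
        have h2 : m ≤ s₀ := min_le_left _ _
        have h3 : m ≤ τ := min_le_right _ _
        have hn : (0:ℝ) ≤ n := Nat.cast_nonneg n
        nlinarith
      have hpos : (0:ℝ) < m * ((n : ℝ) + 1) := by positivity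
      calc dist (f n) (f (n + 1)) ≤ 1 / (s₀ + n * τ) ^ 2 := hbound n
        _ ≤ 1 / (m * ((n : ℝ) + 1)) ^ 2 := by
            apply one_div_le_one_div_of_le (by positivity)
            apply pow_le_pow_left₀ hpos.le h1
        _ = (1 / m ^ 2) * (1 / ((n : ℝ) + 1) ^ 2) := by
            rw [mul_pow, ← one_div_mul_one_div]
    have hsum0 : Summable (fun n : ℕ => 1 / ((n : ℝ) + 1) ^ 2) := by
      have h := (Real.summable_one_div_nat_pow (p := 2)).mpr one_lt_two
      have := (summable_nat_add_iff (f := fun n : ℕ => 1 / (n : ℝ) ^ 2) 1).mpr h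
      convert this using 2 with n
      all_goals push_cast
      all_goals rfl
    have hsum : Summable (fun n : ℕ => dist (f n) (f (n + 1))) := by
      apply Summable.of_nonneg_of_le (fun n => dist_nonneg) hbound2
      exact hsum0.mul_left _
    have hC : CauchySeq f := cauchySeq_of_summable_dist hsum
    obtain ⟨x, hx⟩ := cauchySeq_tendsto_of_complete hC
    refine ⟨x, ?_⟩
    have hcont : Continuous T :=
      (LipschitzWith.of_dist_le_mul (K := 1) (fun a b => by
        rw [NNReal.coe_one, one_mul]; exact hne a b)).continuous
    have h1 : Filter.Tendsto (fun n => T (f n)) Filter.atTop (nhds (T x)) :=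
      (hcont.tendsto x).comp hx
    have h2 : Filter.Tendsto (fun n => T (f n)) Filter.atTop (nhds x) := by
      have : (fun n => T (f n)) = fun n => f (n + 1) := by
        funext n; rw [hsucc n]
      rw [this]
      exact hx.comp (Filter.tendsto_add_atTop_nat 1)
    exact tendsto_nhds_unique h1 h2
  obtain ⟨x, hx⟩ := hexists
  refine ⟨x, hx, ?_⟩
  intro y hy
  by_contra hne'
  have hd : 0 < dist y x := dist_pos.mpr hne'
  have h := hcontr y x (by rw [hy, hx]; exact hd)
  rw [hy, hx] at h
  have hs : 0 < Real.sqrt (dist y x) := Real.sqrt_pos.mpr hd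
  have hden : (1:ℝ) < (1 + τ * Real.sqrt (dist y x)) ^ 2 := by nlinarith [mul_pos hτ hs, sq_nonneg (τ * Real.sqrt (dist y x))]
  have : dist y x / (1 + τ * Real.sqrt (dist y x)) ^ 2 < dist y x := by
    rw [div_lt_iff₀ (by positivity)]
    nlinarith
  linarith
end

section
/- Under the hypotheses of the existence theorem (0 < σ < 1, 3 < α ≤ 4, f : (0,1]×[0,∞) → [0,∞) continuous with t^σ f(t,y) continuous on [0,1]×[0,∞) and satisfying the Lipschitz-type contraction condition with λ ≤ 1/N), assume additionally that lim_{t→0⁺} f(t,0) = ∞ and that y ↦ t^σ f(t,y) is nondecreasing for each t. Then the unique nonnegative solution u of u(t) = ∫₀¹ G(t,s) f(s,u(s)) ds satisfies u(t) > 0 for all t ∈ (0,1). -/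
open Real Filter

lemma rpow_tangent {β a b : ℝ} (hβ : 1 ≤ β) (hb : 0 ≤ b) (hba : b ≤ a) :
    a ^ β - b ^ β ≤ β * a ^ (β - 1) * (a - b) := by
  rcases eq_or_lt_of_le (hb.trans hba) with h | ha
  · have hb0 : b = 0 := le_antisymm (h ▸ hba) hb
    subst hb0; rw [← h]
    simp [Real.zero_rpow (by positivity : β ≠ 0)]
  · have key := one_add_mul_self_le_rpow_one_add (s := b / a - 1)
      (by have : 0 ≤ b / a := div_nonneg hb ha.le; linarith) hβ
    have h1 : (1 + (b / a - 1)) = b / a := by ring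
    rw [h1, Real.div_rpow hb ha.le] at key
    have haβ : 0 < a ^ β := Real.rpow_pos_of_pos ha β
    have e1 : a ^ β = a ^ (β - 1) * a := by
      rw [← Real.rpow_add_one ha.ne' (β - 1)]; ring_nf
    have h2 : a ^ β * (1 + β * (b / a - 1)) ≤ b ^ β := by
      calc a ^ β * (1 + β * (b / a - 1)) ≤ a ^ β * (b ^ β / a ^ β) :=
            mul_le_mul_of_nonneg_left key haβ.le
        _ = b ^ β := by field_simp
    have h3 : a ^ β * (b / a - 1) = a ^ (β - 1) * (b - a) := by
      rw [e1]; field_simp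
    nlinarith [h2, h3]

lemma greenG_pos {α t s : ℝ} (hα : 3 < α) (ht : t ∈ Set.Ioo (0:ℝ) 1)
    (hs : s ∈ Set.Ioo (0:ℝ) 1) : 0 < greenG α t s := by
  obtain ⟨ht0, ht1⟩ := ht
  obtain ⟨hs0, hs1⟩ := hs
  have hΓ : 0 < Real.Gamma α := Real.Gamma_pos_of_pos (by linarith)
  unfold greenG
  split_ifs with hst
  · -- s ≤ t
    set β : ℝ := α - 2 with hβdef
    have hβ : 1 ≤ β := by simp [hβdef]; linarith
    set a : ℝ := t * (1 - s) with hadef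
    set b : ℝ := t - s with hbdef
    set c : ℝ := s * (1 - t) with hcdef
    have ha : 0 < a := by apply mul_pos ht0; linarith
    have hc : 0 < c := by apply mul_pos hs0; linarith
    have hbac : b = a - c := by simp [hadef, hbdef, hcdef]; ring
    have hb0 : 0 ≤ b := by simp [hbdef]; linarith
    have hba : b ≤ a := by rw [hbac]; linarith
    have hmul : (1 - s) ^ β * t ^ β = a ^ β := by
      rw [← Real.mul_rpow (by linarith) ht0.le, hadef, mul_comm]
    have haβ : 0 < a ^ β := Real.rpow_pos_of_pos ha β
    have e1 : a ^ β = a ^ (β - 1) * a := by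
      rw [← Real.rpow_add_one ha.ne' (β - 1)]; ring_nf
    have hrw : (1 - s) ^ (α - 2) * t ^ (α - 2) * ((s - t) + (α - 2) * (1 - t) * s)
        = a ^ β * (-b + β * c) := by
      rw [show (α - 2 : ℝ) = β from rfl, hmul]
      congr 1
      simp [hbdef, hcdef, hβdef]; ring
    apply div_pos _ hΓ
    rw [hrw]
    rcases eq_or_lt_of_le hb0 with hb | hb
    · have hz : (t - s) ^ (α - 1) = 0 := by
        rw [show t - s = b from rfl, ← hb]
        exact Real.zero_rpow (by linarith)
      rw [hz, ← hb]
      have hβc : 0 < β * c := mul_pos (by linarith) hc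
      nlinarith [haβ]
    · have hba1 : (t - s) ^ (α - 1) = b ^ β * b := by
        rw [show (α - 1 : ℝ) = β + 1 by rw [hβdef]; ring, Real.rpow_add_one hb.ne' β]
      rw [hba1]
      have htan := rpow_tangent hβ hb0 hba
      have hac : a - b = c := by rw [hbac]; ring
      rw [hac] at htan
      have hab : b < a := by rw [hbac]; linarith
      have hp1 : 0 < a ^ (β - 1) := Real.rpow_pos_of_pos ha _
      have h4 : b * (a ^ β - b ^ β) ≤ b * (β * a ^ (β - 1) * c) :=
        mul_le_mul_of_nonneg_left htan hb.le
      have h5 : b * (β * a ^ (β - 1) * c) < a * (β * a ^ (β - 1) * c) := by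
        apply mul_lt_mul_of_pos_right hab
        have hβ0 : 0 < β := by linarith
        positivity
      have h6 : a * (β * a ^ (β - 1) * c) = a ^ β * (β * c) := by rw [e1]; ring
      nlinarith [h4, h5, h6]
  · -- t < s
    push_neg at hst
    apply div_pos _ hΓ
    have h1 : 0 < (1 - s) ^ (α - 2) := Real.rpow_pos_of_pos (by linarith) _
    have h2 : 0 < t ^ (α - 2) := Real.rpow_pos_of_pos ht0 _
    have h3 : 0 < (s - t) + (α - 2) * (1 - t) * s := by
      have := mul_pos (mul_pos (by linarith : (0:ℝ) < α - 2) (by linarith : (0:ℝ) < 1 - t)) hs0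
      linarith
    positivity

lemma greenG_abs_le {α t s : ℝ} (hα : 3 < α) (hα4 : α ≤ 4) (ht : t ∈ Set.Icc (0:ℝ) 1)
    (hs : s ∈ Set.Icc (0:ℝ) 1) : |greenG α t s| ≤ 4 / Real.Gamma α := by
  have hΓ : 0 < Real.Gamma α := Real.Gamma_pos_of_pos (by linarith)
  obtain ⟨ht0, ht1⟩ := ht
  obtain ⟨hs0, hs1⟩ := hs
  have hY0 : 0 ≤ (1 - s) ^ (α - 2) := Real.rpow_nonneg (by linarith) _
  have hY1 : (1 - s) ^ (α - 2) ≤ 1 := Real.rpow_le_one (by linarith) (by linarith) (by linarith)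
  have hZ0 : 0 ≤ t ^ (α - 2) := Real.rpow_nonneg ht0 _
  have hZ1 : t ^ (α - 2) ≤ 1 := Real.rpow_le_one ht0 ht1 (by linarith)
  have hW : |(s - t) + (α - 2) * (1 - t) * s| ≤ 3 := by
    have hP0 : 0 ≤ (α - 2) * (1 - t) * s :=
      mul_nonneg (mul_nonneg (by linarith) (by linarith)) hs0
    have h1t : (1 - t) * s ≤ 1 := mul_le_one₀ (by linarith) hs0 hs1
    have hP2 : (α - 2) * (1 - t) * s ≤ 2 := by nlinarith
    rw [abs_le]; constructor <;> nlinarith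
  have hYZW : |(1 - s) ^ (α - 2) * t ^ (α - 2) * ((s - t) + (α - 2) * (1 - t) * s)| ≤ 3 := by
    rw [abs_mul, abs_mul, abs_of_nonneg hY0, abs_of_nonneg hZ0]
    have h1 : (1 - s) ^ (α - 2) * t ^ (α - 2) ≤ 1 := by nlinarith
    have h2 : 0 ≤ (1 - s) ^ (α - 2) * t ^ (α - 2) := mul_nonneg hY0 hZ0
    calc (1 - s) ^ (α - 2) * t ^ (α - 2) * |(s - t) + (α - 2) * (1 - t) * s|
        ≤ 1 * |(s - t) + (α - 2) * (1 - t) * s| :=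
          mul_le_mul_of_nonneg_right h1 (abs_nonneg _)
      _ ≤ 3 := by rw [one_mul]; exact hW
  unfold greenG
  split_ifs with hst
  · have hX0 : 0 ≤ (t - s) ^ (α - 1) := Real.rpow_nonneg (by linarith) _
    have hX1 : (t - s) ^ (α - 1) ≤ 1 := Real.rpow_le_one (by linarith) (by linarith) (by linarith)
    rw [abs_div, abs_of_pos hΓ, div_le_div_iff_of_pos_right hΓ]
    calc |(t - s) ^ (α - 1) + (1 - s) ^ (α - 2) * t ^ (α - 2) * ((s - t) + (α - 2) * (1 - t) * s)|
        ≤ |(t - s) ^ (α - 1)| + |(1 - s) ^ (α - 2) * t ^ (α - 2) * ((s - t) + (α - 2) * (1 - t) * s)| :=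
          abs_add_le _ _
      _ ≤ 4 := by rw [abs_of_nonneg hX0]; linarith
  · rw [abs_div, abs_of_pos hΓ, div_le_div_iff_of_pos_right hΓ]
    linarith

lemma greenG_measurable (α t : ℝ) : Measurable (fun s => greenG α t s) := by
  unfold greenG
  apply Measurable.ite (measurableSet_le measurable_id measurable_const) <;> fun_prop

lemma greenG_nonneg {α t s : ℝ} (hα : 3 < α) (ht : t ∈ Set.Ioo (0:ℝ) 1)
    (hs : s ∈ Set.Ioc (0:ℝ) 1) : 0 ≤ greenG α t s := by
  rcases lt_or_eq_of_le hs.2 with h1 | h1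
  · exact (greenG_pos hα ht ⟨hs.1, h1⟩).le
  · subst h1
    unfold greenG
    rw [if_neg (by push_neg; exact ht.2)]
    rw [show (1:ℝ) - 1 = 0 by ring, Real.zero_rpow (by linarith)]
    simp

theorem stmt19 (σ α : ℝ) (hσ0 : 0 < σ) (hσ1 : σ < 1) (hα : 3 < α) (hα4 : α ≤ 4)
    (f : ℝ → ℝ → ℝ)
    (hfnn : ∀ t ∈ Set.Ioc (0:ℝ) 1, ∀ y : ℝ, 0 ≤ y → 0 ≤ f t y)
    (hfcont : ContinuousOn (fun p : ℝ × ℝ => f p.1 p.2) (Set.Ioc 0 1 ×ˢ Set.Ici 0))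
    (hfext : ContinuousOn (fun p : ℝ × ℝ => p.1 ^ σ * f p.1 p.2) (Set.Icc 0 1 ×ˢ Set.Ici 0))
    (N : ℝ)
    (hN : IsGreatest ((fun t : ℝ => ∫ s in (0:ℝ)..1, greenG α t s * s ^ (-σ)) '' Set.Icc 0 1) N)
    (lam τ : ℝ) (hlam0 : 0 < lam) (hlamN : lam ≤ 1 / N) (hτ : 0 < τ)
    (hcontr : ∀ t ∈ Set.Icc (0:ℝ) 1, ∀ x : ℝ, 0 ≤ x → ∀ y : ℝ, 0 ≤ y →
      t ^ σ * |f t x - f t y| ≤ lam * |x - y| / (1 + τ * Real.sqrt |x - y|) ^ 2)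
    (hsing : Tendsto (fun t : ℝ => f t 0) (nhdsWithin 0 (Set.Ioi 0)) atTop)
    (hmono : ∀ t ∈ Set.Icc (0:ℝ) 1, MonotoneOn (fun y : ℝ => t ^ σ * f t y) (Set.Ici 0))
    (u : ℝ → ℝ) (hu : ContinuousOn u (Set.Icc 0 1))
    (hunn : ∀ t ∈ Set.Icc (0:ℝ) 1, 0 ≤ u t)
    (heq : ∀ t ∈ Set.Icc (0:ℝ) 1, u t = ∫ s in (0:ℝ)..1, greenG α t s * f s (u s)) :
    ∀ t ∈ Set.Ioo (0:ℝ) 1, 0 < u t := by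
  intro t ht
  have htIcc : t ∈ Set.Icc (0:ℝ) 1 := ⟨ht.1.le, ht.2.le⟩
  by_contra hcon
  have hut : u t = 0 := le_antisymm (not_lt.1 hcon) (hunn t htIcc)
  set g : ℝ → ℝ := fun s => greenG α t s * f s (u s) with hgdef
  have hΓ : 0 < Real.Gamma α := Real.Gamma_pos_of_pos (by linarith)
  -- continuity of φ s = s^σ * f s (u s) on [0,1]
  set φ : ℝ → ℝ := fun s => s ^ σ * f s (u s) with hφdef
  have hφcont : ContinuousOn φ (Set.Icc 0 1) := by
    have hmap : Set.MapsTo (fun s => ((s, u s) : ℝ × ℝ)) (Set.Icc 0 1)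
        (Set.Icc 0 1 ×ˢ Set.Ici 0) := fun s hs => ⟨hs, hunn s hs⟩
    exact hfext.comp (continuousOn_id.prodMk hu) hmap
  obtain ⟨C, hC⟩ := (isCompact_Icc).exists_bound_of_continuousOn hφcont
  have hC0 : 0 ≤ C := le_trans (norm_nonneg (φ 0)) (hC 0 ⟨le_refl 0, zero_le_one⟩)
  -- f s (u s) = s^(-σ) * φ s on (0,1]
  have hfeq : ∀ s ∈ Set.Ioc (0:ℝ) 1, f s (u s) = s ^ (-σ) * φ s := by
    intro s hs
    have hsσ : s ^ (-σ) * s ^ σ = 1 := by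
      rw [← Real.rpow_add hs.1]; simp
    simp only [hφdef]
    rw [← mul_assoc, hsσ, one_mul]
  -- measurability of g on restrict (Ioc 0 1)
  have hφm : MeasureTheory.AEStronglyMeasurable φ
      (MeasureTheory.volume.restrict (Set.Ioc 0 1)) :=
    (hφcont.mono Set.Ioc_subset_Icc_self).aestronglyMeasurable measurableSet_Ioc
  have hψm : MeasureTheory.AEStronglyMeasurable (fun s => s ^ (-σ) * φ s)
      (MeasureTheory.volume.restrict (Set.Ioc 0 1)) :=
    ((by fun_prop : Measurable (fun s : ℝ => s ^ (-σ))).aestronglyMeasurable).mul hφm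
  have hfm : MeasureTheory.AEStronglyMeasurable (fun s => f s (u s))
      (MeasureTheory.volume.restrict (Set.Ioc 0 1)) := by
    apply hψm.congr
    filter_upwards [MeasureTheory.ae_restrict_mem measurableSet_Ioc] with s hs
    exact (hfeq s hs).symm
  have hgm : MeasureTheory.AEStronglyMeasurable g
      (MeasureTheory.volume.restrict (Set.Ioc 0 1)) :=
    ((greenG_measurable α t).aestronglyMeasurable).mul hfm
  -- integrability
  have hbnd_int : IntervalIntegrable (fun s : ℝ => (4 / Real.Gamma α * C) * s ^ (-σ))
      MeasureTheory.volume 0 1 :=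
    (intervalIntegral.intervalIntegrable_rpow' (by linarith)).const_mul _
  have hIoc : Set.uIoc (0:ℝ) 1 = Set.Ioc 0 1 := Set.uIoc_of_le zero_le_one
  have hgle : ∀ s ∈ Set.Ioc (0:ℝ) 1, ‖g s‖ ≤ ‖(4 / Real.Gamma α * C) * s ^ (-σ)‖ := by
    intro s hs
    have hsIcc : s ∈ Set.Icc (0:ℝ) 1 := Set.Ioc_subset_Icc_self hs
    have hσs : (0:ℝ) ≤ s ^ (-σ) := Real.rpow_nonneg hs.1.le _
    have h1 : |f s (u s)| ≤ s ^ (-σ) * C := by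
      rw [hfeq s hs, abs_mul, abs_of_nonneg hσs]
      exact mul_le_mul_of_nonneg_left (hC s hsIcc) hσs
    have h2 : |greenG α t s| ≤ 4 / Real.Gamma α := greenG_abs_le hα hα4 htIcc hsIcc
    rw [Real.norm_eq_abs, Real.norm_eq_abs, hgdef]
    calc |greenG α t s * f s (u s)| = |greenG α t s| * |f s (u s)| := abs_mul _ _
      _ ≤ (4 / Real.Gamma α) * (s ^ (-σ) * C) := by
          apply mul_le_mul h2 h1 (abs_nonneg _) (by positivity)
      _ = 4 / Real.Gamma α * C * s ^ (-σ) := by ring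
      _ ≤ |4 / Real.Gamma α * C * s ^ (-σ)| := le_abs_self _
  have hgint : IntervalIntegrable g MeasureTheory.volume 0 1 := by
    apply hbnd_int.mono_fun (by rwa [hIoc]) _
    rw [hIoc]
    filter_upwards [MeasureTheory.ae_restrict_mem measurableSet_Ioc] with s hs
    exact hgle s hs
  have hgIntOn : MeasureTheory.IntegrableOn g (Set.Ioc 0 1) :=
    (intervalIntegrable_iff_integrableOn_Ioc_of_le zero_le_one).1 hgint
  -- the integral is zero
  have h0 : ∫ s in Set.Ioc (0:ℝ) 1, g s = 0 := by
    have := heq t htIcc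
    rw [hut, intervalIntegral.integral_of_le zero_le_one] at this
    exact this.symm
  -- g nonneg a.e.
  have hgnn : 0 ≤ᵐ[MeasureTheory.volume.restrict (Set.Ioc 0 1)] g := by
    filter_upwards [MeasureTheory.ae_restrict_mem measurableSet_Ioc] with s hs
    exact mul_nonneg (greenG_nonneg hα ht hs)
      (hfnn s hs (u s) (hunn s (Set.Ioc_subset_Icc_self hs)))
  have hae0 : g =ᵐ[MeasureTheory.volume.restrict (Set.Ioc 0 1)] 0 :=
    (MeasureTheory.integral_eq_zero_iff_of_nonneg_ae hgnn hgIntOn).1 h0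
  -- get δ from hsing
  have hev : ∀ᶠ s in nhdsWithin 0 (Set.Ioi 0), 1 ≤ f s 0 :=
    hsing.eventually (eventually_ge_atTop 1)
  rw [eventually_nhdsWithin_iff, Metric.eventually_nhds_iff] at hev
  obtain ⟨ε, hε0, hε⟩ := hev
  set δ : ℝ := min ε 1 with hδdef
  have hδ0 : 0 < δ := lt_min hε0 one_pos
  -- g positive on Ioo 0 δ
  have hgpos : ∀ s ∈ Set.Ioo (0:ℝ) δ, 0 < g s := by
    intro s hs
    have hs1 : s ∈ Set.Ioo (0:ℝ) 1 := ⟨hs.1, lt_of_lt_of_le hs.2 (min_le_right _ _)⟩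
    have hsIcc : s ∈ Set.Icc (0:ℝ) 1 := ⟨hs1.1.le, hs1.2.le⟩
    have hf0 : 1 ≤ f s 0 := by
      refine hε ?_ hs.1
      rw [Real.dist_eq, sub_zero, abs_of_pos hs.1]
      exact lt_of_lt_of_le hs.2 (min_le_left _ _)
    have hfu : f s 0 ≤ f s (u s) := by
      have hm := hmono s hsIcc (Set.self_mem_Ici) (hunn s hsIcc) (hunn s hsIcc)
      have hsσ : 0 < s ^ σ := Real.rpow_pos_of_pos hs.1 σ
      exact le_of_mul_le_mul_left hm hsσ
    exact mul_pos (greenG_pos hα ht hs1) (by linarith)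
  -- contradiction
  have hsub : Set.Ioo (0:ℝ) δ ⊆ {s | ¬ g s = (0:ℝ → ℝ) s} ∩ Set.Ioc 0 1 := by
    intro s hs
    refine ⟨(hgpos s hs).ne', ?_⟩
    exact ⟨hs.1, (lt_of_lt_of_le hs.2 (min_le_right _ _)).le⟩
  have hnull : MeasureTheory.volume ({s | ¬ g s = (0:ℝ → ℝ) s} ∩ Set.Ioc (0:ℝ) 1) = 0 := by
    have := hae0
    rw [Filter.EventuallyEq, MeasureTheory.ae_iff] at this
    rwa [MeasureTheory.Measure.restrict_apply' measurableSet_Ioc] at this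
  have : MeasureTheory.volume (Set.Ioo (0:ℝ) δ) = 0 :=
    MeasureTheory.measure_mono_null hsub hnull
  rw [Real.volume_Ioo, sub_zero] at this
  exact absurd this (by simp [ENNReal.ofReal_eq_zero]; linarith)
end
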